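/- Let K be a field, n ≥ 2, t₁,…,t_n ∈ K with t_j ≠ 0 and t_j ≠ 1 for all j, and let c : K → K be a ring homomorphism with c(t_j) = t_j⁻¹ for all j. Then for every permutation τ of {1,…,n} and every index i with 1 ≤ i ≤ n−1, the matrix γ = U_{n;i}(t_{τ(i+1)})⁻¹ satisfies Ω(τ∘(i,i+1))·γ⁻¹ = γ̄ᵀ·Ω(τ), where (i,i+1) is the transposition of i and i+1. -/

import Mathlib

open Matrix

section Helpers
variable {K : Type*} [Field K]

variable {K : Type*} [Field K]

private lemma sumR2 {n : ℕ} (f : Fin n → K) (a b : Fin n) (hab : a ≠ b) (x y : K) :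
    ∑ m, (if m = a then x else if m = b then y else 0) * f m = x * f a + y * f b := by
  have h : ∀ m : Fin n, (if m = a then x else if m = b then y else 0) * f m
      = (if m = a then x * f a else 0) + (if m = b then y * f b else 0) := by
    intro m; split_ifs with h1 h2 <;> simp_all
  simp [h, Finset.sum_add_distrib, Finset.sum_ite_eq']

private lemma sumL2 {n : ℕ} (f : Fin n → K) (a b : Fin n) (hab : a ≠ b) (x y : K) :
    ∑ m, f m * (if m = a then x else if m = b then y else 0) = f a * x + f b * y := by
  have h : ∀ m : Fin n, f m * (if m = a then x else if m = b then y else 0)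
      = (if m = a then f a * x else 0) + (if m = b then f b * y else 0) := by
    intro m; split_ifs with h1 h2 <;> simp_all
  simp [h, Finset.sum_add_distrib, Finset.sum_ite_eq']

private lemma sumR1 {n : ℕ} (f : Fin n → K) (l : Fin n) :
    ∑ m, (if m = l then (1:K) else 0) * f m = f l := by
  simp [ite_mul, Finset.sum_ite_eq']

private lemma sumL1 {n : ℕ} (f : Fin n → K) (l : Fin n) :
    ∑ m, f m * (if m = l then (1:K) else 0) = f l := by
  simp [mul_ite, Finset.sum_ite_eq']

end Helpers


/-- `U K n i t` is the `n × n` matrix over `K` (1-indexed rows/columns `1,…,n`) that equals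
the identity matrix except that its `2 × 2` block in rows `i, i+1` and columns `i, i+1`
is `((1-t, 1), (t, 0))`.  A row index `r : Fin n` corresponds to the 1-indexed row `r.val + 1`. -/
def GassnerU (K : Type*) [CommRing K] (n : ℕ) (i : ℕ) (t : K) : Matrix (Fin n) (Fin n) K :=
  Matrix.of fun r c =>
    if r.val + 1 = i ∧ c.val + 1 = i then 1 - t
    else if r.val + 1 = i ∧ c.val = i then 1
    else if r.val = i ∧ c.val + 1 = i then t
    else if r.val = i ∧ c.val = i then 0
    else if r = c then 1 else 0

/-- `Ω(τ)`: the `n × n` matrix with diagonal entries `(1 - t (τ r))⁻¹`, entries below the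
diagonal equal to `1`, and entries above the diagonal equal to `0`. -/
def GassnerOmega {K : Type*} [Field K] {n : ℕ} (t : Fin n → K) (τ : Equiv.Perm (Fin n)) :
    Matrix (Fin n) (Fin n) K :=
  Matrix.of fun r c => if r = c then (1 - t (τ r))⁻¹ else if c < r then 1 else 0


section Helpers2
variable {K : Type*} [Field K]

/-- the explicit inverse of `GassnerU` -/
private def Vmat {n : ℕ} (a b : Fin n) (s : K) : Matrix (Fin n) (Fin n) K :=
  Matrix.of fun k r =>
    if k = a then (if r = a then 0 else if r = b then s⁻¹ else 0)
    else if k = b then (if r = a then 1 else if r = b then 1 - s⁻¹ else 0)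
    else if k = r then 1 else 0

section Entries

variable {n i : ℕ} {a b : Fin n} (hi1 : 1 ≤ i) (ha : a.val = i - 1) (hb : b.val = i) {s : K}

include hi1 ha hb in
private lemma hU_eq : ∀ k l : Fin n, GassnerU K n i s k l =
    if k = a then (if l = a then 1 - s else if l = b then 1 else 0)
    else if k = b then (if l = a then s else if l = b then 0 else 0)
    else if k = l then 1 else 0 := by
  have hkey1 : ∀ k : Fin n, (k.val + 1 = i) ↔ k = a := by intro k; rw [Fin.ext_iff]; omega
  have hkey2 : ∀ k : Fin n, (k.val = i) ↔ k = b := by intro k; rw [Fin.ext_iff]; omega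
  have hab : a ≠ b := fun h => by rw [Fin.ext_iff] at h; omega
  intro k l
  simp only [GassnerU, Matrix.of_apply, hkey1, hkey2]
  split_ifs <;> simp_all

include hi1 ha hb in
private lemma hU_rowa : ∀ m, GassnerU K n i s a m = if m = a then 1 - s else if m = b then 1 else 0 := by
  intro m; rw [hU_eq hi1 ha hb]; simp

include hi1 ha hb in
private lemma hU_rowb : ∀ m, GassnerU K n i s b m = if m = a then s else if m = b then 0 else 0 := by
  have hba : b ≠ a := fun h => by rw [Fin.ext_iff] at h; omega
  intro m; rw [hU_eq hi1 ha hb]; simp [hba]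

include hi1 ha hb in
private lemma hU_rowk : ∀ k, k ≠ a → k ≠ b → ∀ m, GassnerU K n i s k m = if m = k then 1 else 0 := by
  intro k hka hkb m; rw [hU_eq hi1 ha hb]; simp [hka, hkb, eq_comm]

include hi1 ha hb in
private lemma hU_cola : ∀ m, GassnerU K n i s m a = if m = a then 1 - s else if m = b then s else 0 := by
  have hab : a ≠ b := fun h => by rw [Fin.ext_iff] at h; omega
  intro m; rw [hU_eq hi1 ha hb]; split_ifs <;> simp_all

include hi1 ha hb in
private lemma hU_colb : ∀ m, GassnerU K n i s m b = if m = a then 1 else if m = b then 0 else 0 := by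
  have hab : a ≠ b := fun h => by rw [Fin.ext_iff] at h; omega
  intro m; rw [hU_eq hi1 ha hb]; split_ifs <;> simp_all

include hi1 ha hb in
private lemma hU_coll : ∀ l : Fin n, l ≠ a → l ≠ b → ∀ m, GassnerU K n i s m l = if m = l then 1 else 0 := by
  intro l hla hlb m; rw [hU_eq hi1 ha hb]; split_ifs <;> simp_all

end Entries

section VEntries

variable {n : ℕ} {a b : Fin n} (hab : a ≠ b) {s : K}

private lemma hV_app : ∀ k r : Fin n, Vmat a b s k r =
    if k = a then (if r = a then 0 else if r = b then s⁻¹ else 0)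
    else if k = b then (if r = a then 1 else if r = b then 1 - s⁻¹ else 0)
    else if k = r then 1 else 0 := fun _ _ => rfl

include hab in
private lemma hV_rowa : ∀ m, Vmat a b s a m = if m = a then 0 else if m = b then s⁻¹ else 0 := by
  intro m; rw [hV_app]; simp

include hab in
private lemma hV_rowb : ∀ m, Vmat a b s b m = if m = a then 1 else if m = b then 1 - s⁻¹ else 0 := by
  intro m; rw [hV_app]; simp [hab.symm]

private lemma hV_rowk : ∀ k, k ≠ a → k ≠ b → ∀ m, Vmat a b s k m = if m = k then 1 else 0 := by
  intro k hka hkb m; rw [hV_app]; simp [hka, hkb, eq_comm]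

include hab in
private lemma hV_cola : ∀ m, Vmat a b s m a = if m = a then 0 else if m = b then 1 else 0 := by
  intro m; rw [hV_app]; split_ifs <;> simp_all

include hab in
private lemma hV_colb : ∀ m, Vmat a b s m b = if m = a then s⁻¹ else if m = b then 1 - s⁻¹ else 0 := by
  intro m; rw [hV_app]; split_ifs <;> simp_all

private lemma hV_coll : ∀ l : Fin n, l ≠ a → l ≠ b → ∀ m, Vmat a b s m l = if m = l then 1 else 0 := by
  intro l hla hlb m; rw [hV_app]; split_ifs <;> simp_all

end VEntries

section Inverse

variable {n i : ℕ} {a b : Fin n} (hi1 : 1 ≤ i) (ha : a.val = i - 1) (hb : b.val = i)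
  {s : K} (hs0 : s ≠ 0)

include hi1 ha hb hs0 in
private lemma hUV : GassnerU K n i s * Vmat a b s = 1 := by
  have hab : a ≠ b := fun h => by rw [Fin.ext_iff] at h; omega
  ext k l
  rw [Matrix.mul_apply, Matrix.one_apply]
  rcases eq_or_ne k a with hka | hka
  · rw [hka]
    simp only [hU_rowa hi1 ha hb]
    rw [sumR2 (fun m => Vmat a b s m l) a b hab]
    rcases eq_or_ne l a with hla | hla
    · rw [hla]; simp [hV_cola hab, hab, hab.symm]
    · rcases eq_or_ne l b with hlb | hlb
      · rw [hlb]; simp only [hV_colb hab, if_pos rfl, ↓reduceIte, if_neg hab.symm, if_neg hab]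
        field_simp
        ring
      · rw [hV_coll l hla hlb, hV_coll l hla hlb]
        simp [hab, hab.symm, hla, hlb, Ne.symm hla, Ne.symm hlb]
  · rcases eq_or_ne k b with hkb | hkb
    · rw [hkb]
      simp only [hU_rowb hi1 ha hb]
      rw [sumR2 (fun m => Vmat a b s m l) a b hab]
      rcases eq_or_ne l a with hla | hla
      · rw [hla]; simp [hV_cola hab, hab, hab.symm]
      · rcases eq_or_ne l b with hlb | hlb
        · rw [hlb]; simp only [hV_colb hab, if_pos rfl, ↓reduceIte, if_neg hab.symm, if_neg hab]
          field_simp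
          ring
        · rw [hV_coll l hla hlb, hV_coll l hla hlb]
          simp [hab, hab.symm, hla, hlb, Ne.symm hla, Ne.symm hlb]
    · simp only [hU_rowk hi1 ha hb k hka hkb]
      rw [sumR1 (fun m => Vmat a b s m l) k]
      rw [hV_app]
      simp [hka, hkb]

include hi1 ha hb hs0 in
private lemma hVU : Vmat a b s * GassnerU K n i s = 1 := by
  have hab : a ≠ b := fun h => by rw [Fin.ext_iff] at h; omega
  ext k l
  rw [Matrix.mul_apply, Matrix.one_apply]
  rcases eq_or_ne k a with hka | hka
  · rw [hka]
    simp only [hV_rowa hab]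
    rw [sumR2 (fun m => GassnerU K n i s m l) a b hab]
    rcases eq_or_ne l a with hla | hla
    · rw [hla]; simp only [hU_cola hi1 ha hb, if_pos rfl, ↓reduceIte, if_neg hab.symm, if_neg hab]
      field_simp
      ring
    · rcases eq_or_ne l b with hlb | hlb
      · rw [hlb]; simp only [hU_colb hi1 ha hb, if_pos rfl, if_neg hab.symm, if_neg hab]
        simp [hab]
      · rw [hU_coll hi1 ha hb l hla hlb, hU_coll hi1 ha hb l hla hlb]
        simp [hab, hab.symm, hla, hlb, Ne.symm hla, Ne.symm hlb]
  · rcases eq_or_ne k b with hkb | hkb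
    · rw [hkb]
      simp only [hV_rowb hab]
      rw [sumR2 (fun m => GassnerU K n i s m l) a b hab]
      rcases eq_or_ne l a with hla | hla
      · rw [hla]; simp only [hU_cola hi1 ha hb, if_pos rfl, ↓reduceIte, if_neg hab.symm, if_neg hab]
        field_simp
        ring
      · rcases eq_or_ne l b with hlb | hlb
        · rw [hlb]; simp only [hU_colb hi1 ha hb, if_pos rfl, if_neg hab.symm, if_neg hab]
          simp [hab.symm]
        · rw [hU_coll hi1 ha hb l hla hlb, hU_coll hi1 ha hb l hla hlb]
          simp [hab, hab.symm, hla, hlb, Ne.symm hla, Ne.symm hlb]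
    · simp only [hV_rowk k hka hkb]
      rw [sumR1 (fun m => GassnerU K n i s m l) k]
      rw [hU_eq hi1 ha hb]
      simp [hka, hkb]

end Inverse
private lemma auxmain {n : ℕ} (t : Fin n → K) (c : K →+* K) (τ : Equiv.Perm (Fin n))
    (i : ℕ) (hi1 : 1 ≤ i) (hi2 : i + 1 ≤ n) (a b : Fin n) (ha : a.val = i - 1) (hb : b.val = i)
    (hs0 : t (τ b) ≠ 0) (hs1 : t (τ b) ≠ 1) (hu1 : t (τ a) ≠ 1)
    (hcs : c (t (τ b)) = (t (τ b))⁻¹) :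
    GassnerOmega t (τ * Equiv.swap a b) * ((GassnerU K n i (t (τ b)))⁻¹)⁻¹ =
      (((GassnerU K n i (t (τ b)))⁻¹).map c)ᵀ * GassnerOmega t τ := by
  set s := t (τ b) with hs
  have hs1' : (1:K) - s ≠ 0 := sub_ne_zero.mpr (fun h => hs1 h.symm)
  have hu1' : (1:K) - t (τ a) ≠ 0 := sub_ne_zero.mpr (fun h => hu1 h.symm)
  have hab : a ≠ b := fun h => by rw [Fin.ext_iff] at h; omega
  have hba : ¬ (b < a) := by rw [Fin.lt_def]; omega
  have haltb : a < b := by rw [Fin.lt_def]; omega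
  have hlt1 : ∀ x : Fin n, x ≠ a → (x < b ↔ x < a) := by
    intro x hx
    have : x.val ≠ a.val := fun h => hx (Fin.ext h)
    rw [Fin.lt_def, Fin.lt_def]; omega
  have hlt2 : ∀ x : Fin n, x ≠ b → (a < x ↔ b < x) := by
    intro x hx
    have : x.val ≠ b.val := fun h => hx (Fin.ext h)
    rw [Fin.lt_def, Fin.lt_def]; omega
  have hUinv : (GassnerU K n i s)⁻¹ = Vmat a b s := inv_eq_right_inv (hUV hi1 ha hb hs0)
  have hVinv : (Vmat a b s)⁻¹ = GassnerU K n i s := inv_eq_right_inv (hVU hi1 ha hb hs0)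
  rw [hUinv, hVinv]
  have hcsi : c s⁻¹ = s := by rw [map_inv₀, hcs, inv_inv]
  have hcV_cola : ∀ m, c (Vmat a b s m a) = if m = a then 0 else if m = b then 1 else 0 := by
    intro m; rw [hV_cola hab]; split_ifs <;> simp
  have hcV_colb : ∀ m, c (Vmat a b s m b) = if m = a then s else if m = b then 1 - s else 0 := by
    intro m; rw [hV_colb hab]; split_ifs <;> simp [hcsi]
  have hcV_coll : ∀ l : Fin n, l ≠ a → l ≠ b → ∀ m,
      c (Vmat a b s m l) = if m = l then 1 else 0 := by
    intro l hla hlb m; rw [hV_coll l hla hlb]; split_ifs <;> simp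
  have hswa : (τ * Equiv.swap a b) a = τ b := by simp [Equiv.swap_apply_left]
  have hswb : (τ * Equiv.swap a b) b = τ a := by simp [Equiv.swap_apply_right]
  have hswk : ∀ r : Fin n, r ≠ a → r ≠ b → (τ * Equiv.swap a b) r = τ r := by
    intro r h1 h2; simp [Equiv.swap_apply_of_ne_of_ne h1 h2]
  ext r l
  rw [Matrix.mul_apply, Matrix.mul_apply]
  simp only [Matrix.transpose_apply, Matrix.map_apply]
  rcases eq_or_ne r a with hra | hra
  · rw [hra]
    simp only [hcV_cola]
    rw [sumR2 (fun m => GassnerOmega t τ m l) a b hab]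
    rcases eq_or_ne l a with hla | hla
    · rw [hla]
      simp only [hU_cola hi1 ha hb]
      rw [sumL2 (fun m => GassnerOmega t (τ * Equiv.swap a b) a m) a b hab]
      simp [GassnerOmega, hswa, hab, Ne.symm hab, hba, haltb]
      field_simp
      rw [← hs, div_self hs1']
    · rcases eq_or_ne l b with hlb | hlb
      · rw [hlb]
        simp only [hU_colb hi1 ha hb]
        rw [sumL2 (fun m => GassnerOmega t (τ * Equiv.swap a b) a m) a b hab]
        simp [GassnerOmega, hswa, hab, Ne.symm hab, hba, haltb]
      · simp only [hU_coll hi1 ha hb l hla hlb]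
        rw [sumL1 (fun m => GassnerOmega t (τ * Equiv.swap a b) a m) l]
        simp [GassnerOmega, Ne.symm hla, Ne.symm hlb, hlt1 l hla]
  · rcases eq_or_ne r b with hrb | hrb
    · rw [hrb]
      simp only [hcV_colb]
      rw [sumR2 (fun m => GassnerOmega t τ m l) a b hab]
      rcases eq_or_ne l a with hla | hla
      · rw [hla]
        simp only [hU_cola hi1 ha hb]
        rw [sumL2 (fun m => GassnerOmega t (τ * Equiv.swap a b) b m) a b hab]
        simp [GassnerOmega, hswb, hab, Ne.symm hab, hba, haltb]
        ring
      · rcases eq_or_ne l b with hlb | hlb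
        · rw [hlb]
          simp only [hU_colb hi1 ha hb]
          rw [sumL2 (fun m => GassnerOmega t (τ * Equiv.swap a b) b m) a b hab]
          simp [GassnerOmega, hswb, hab, Ne.symm hab, hba, haltb]
          field_simp
          rw [← hs, div_self hs1']
        · simp only [hU_coll hi1 ha hb l hla hlb]
          rw [sumL1 (fun m => GassnerOmega t (τ * Equiv.swap a b) b m) l]
          simp [GassnerOmega, Ne.symm hla, Ne.symm hlb, hlt1 l hla, hba]
          split_ifs <;> ring
    · simp only [hcV_coll r hra hrb]
      rw [sumR1 (fun m => GassnerOmega t τ m l) r]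
      rcases eq_or_ne l a with hla | hla
      · rw [hla]
        simp only [hU_cola hi1 ha hb]
        rw [sumL2 (fun m => GassnerOmega t (τ * Equiv.swap a b) r m) a b hab]
        simp [GassnerOmega, hra, hrb, hlt2 r hrb]
        split_ifs <;> ring
      · rcases eq_or_ne l b with hlb | hlb
        · rw [hlb]
          simp only [hU_colb hi1 ha hb]
          rw [sumL2 (fun m => GassnerOmega t (τ * Equiv.swap a b) r m) a b hab]
          simp [GassnerOmega, hra, hrb, hlt2 r hrb]
        · simp only [hU_coll hi1 ha hb l hla hlb]
          rw [sumL1 (fun m => GassnerOmega t (τ * Equiv.swap a b) r m) l]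
          simp [GassnerOmega, Equiv.swap_apply_of_ne_of_ne hra hrb]


end Helpers2

/-- Unitarity property for a negative generator below an arbitrary permutation `τ`:
for `γ = U_{n;i}(t_{τ(i+1)})⁻¹` one has `Ω(τ ∘ (i,i+1)) · γ⁻¹ = γ̄ᵀ · Ω(τ)`, where `γ̄` is the
entrywise application of the ring homomorphism `c` (which satisfies `c (t_j) = t_j⁻¹`). -/
theorem gassner_unitarity_neg_generator_perm {K : Type*} [Field K] (n : ℕ) (hn : 2 ≤ n)
    (t : Fin n → K) (ht0 : ∀ j, t j ≠ 0) (ht1 : ∀ j, t j ≠ 1)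
    (c : K →+* K) (hc : ∀ j, c (t j) = (t j)⁻¹)
    (τ : Equiv.Perm (Fin n)) (i : ℕ) (hi1 : 1 ≤ i) (hi2 : i ≤ n - 1) :
    GassnerOmega t (τ * Equiv.swap (⟨i - 1, by omega⟩ : Fin n) ⟨i, by omega⟩) *
        ((GassnerU K n i (t (τ ⟨i, by omega⟩)))⁻¹)⁻¹ =
      (((GassnerU K n i (t (τ ⟨i, by omega⟩)))⁻¹).map c)ᵀ * GassnerOmega t τ := by
  exact auxmain t c τ i hi1 (by omega) ⟨i - 1, by omega⟩ ⟨i, by omega⟩ rfl rfl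
    (ht0 _) (ht1 _) (ht1 _) (hc _)
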